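/- Associativity of einsum: given tensors T₁,T₂,T₃ with index strings I₁,I₂,I₃, an output string I, and intermediate output strings I₄ with σ(I₄) = (σ(I₁)∪σ(I₂)) ∩ (σ(I₃)∪σ(I)) and I₅ with σ(I₅) = (σ(I₂)∪σ(I₃)) ∩ (σ(I₁)∪σ(I)), it holds that einsum(I₁,I₂,I₃ → I; T₁,T₂,T₃) = einsum(I₄,I₃ → I; einsum(I₁,I₂ → I₄; T₁,T₂), T₃) = einsum(I₁,I₅ → I; T₁, einsum(I₂,I₃ → I₅; T₂,T₃)). -/
import Mathlib


/-- `occurs Is s` : symbol `s` occurs in one of the input index strings `Is`. -/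
abbrev occurs {S ι : Type*} {o : ι → ℕ} (Is : (i : ι) → Fin (o i) → S) (s : S) : Prop :=
  ∃ i k, Is i k = s

/-- General einsum over a commutative semiring: inputs indexed by `ι`,
index symbols from `S` with axis lengths `d`, input index strings `Is`,
output index string `I` (whose symbols all occur in the inputs, witnessed by `hI`),
and operand tensors `T`.  A tensor of order `o` with index string `J` is represented
as a function from positions `(j : Fin o) → Fin (d (J j))` to `R`.
The sum ranges over global positions, i.e. assignments of values to the
index symbols occurring in the expression. -/
noncomputable def einsum {R S ι : Type*} [CommSemiring R] [Fintype S] [DecidableEq S]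
    [Fintype ι] (d : S → ℕ) {o : ι → ℕ} (Is : (i : ι) → Fin (o i) → S)
    {m : ℕ} (I : Fin m → S) (hI : ∀ j, occurs Is (I j))
    (T : (i : ι) → ((j : Fin (o i)) → Fin (d (Is i j))) → R) :
    ((j : Fin m) → Fin (d (I j))) → R :=
  fun x => ∑ xh : ((s : {s : S // occurs Is s}) → Fin (d s.1)),
    if (fun j => xh ⟨I j, hI j⟩) = x then ∏ i, T i (fun j => xh ⟨Is i j, ⟨i, j, rfl⟩⟩) else 0

/-- Dependent eliminator for sum types, used to combine two families of
index strings / tensors into one family. -/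
def delim {ι κ : Type*} {C : ι ⊕ κ → Sort*} (f : ∀ i, C (.inl i)) (g : ∀ j, C (.inr j)) :
    ∀ x, C x
  | .inl i => f i
  | .inr j => g j


lemma einsum_key {R S : Type*} [CommSemiring R] [Fintype S] [DecidableEq S] (d : S → ℕ)
    (P Q A : S → Prop) [DecidablePred P] [DecidablePred Q] [DecidablePred A]
    (hQP : ∀ s, Q s → P s) (hAP : ∀ s, A s → P s) (hPA : ∀ s, P s → A s ∨ Q s)
    {n : ℕ} (J : Fin n → S) (hJA : ∀ j, A (J j)) (hJQ : ∀ j, Q (J j))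
    (hAQ : ∀ s, A s → Q s → ∃ j, J j = s)
    (F : ((s : {s : S // A s}) → Fin (d s.1)) → R)
    (G : ((s : {s : S // Q s}) → Fin (d s.1)) → R) :
    ∑ yh : ((s : {s : S // Q s}) → Fin (d s.1)),
      (∑ zh : ((s : {s : S // A s}) → Fin (d s.1)),
        if (fun j => zh ⟨J j, hJA j⟩) = (fun j => yh ⟨J j, hJQ j⟩) then F zh else 0) * G yh
    = ∑ xh : ((s : {s : S // P s}) → Fin (d s.1)),
        F (fun s => xh ⟨s.1, hAP s.1 s.2⟩) * G (fun s => xh ⟨s.1, hQP s.1 s.2⟩) := by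
  classical
  -- push G into the inner sum and combine into a sum over pairs
  simp_rw [Finset.sum_mul, ite_mul, zero_mul]
  rw [← Fintype.sum_prod_type' (f := fun yh zh =>
    if (fun j => zh ⟨J j, hJA j⟩) = (fun j => yh ⟨J j, hJQ j⟩) then F zh * G yh else 0)]
  -- restrict to agreeing pairs
  rw [← Finset.sum_filter]
  symm
  refine Finset.sum_nbij'
    (i := fun xh => ((fun s => xh ⟨s.1, hQP s.1 s.2⟩, fun s => xh ⟨s.1, hAP s.1 s.2⟩) :
      (((s : {s : S // Q s}) → Fin (d s.1)) × ((s : {s : S // A s}) → Fin (d s.1)))))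
    (j := fun p s => if h : A s.1 then p.2 ⟨s.1, h⟩ else p.1 ⟨s.1, (hPA s.1 s.2).resolve_left h⟩)
    ?_ ?_ ?_ ?_ ?_
  · intro xh _
    simp only [Finset.mem_filter, Finset.mem_univ, true_and]
  · intro p _; exact Finset.mem_univ _
  · intro xh _
    funext s
    by_cases h : A s.1
    · exact dif_pos h
    · exact dif_neg h
  · intro p hp
    simp only [Finset.mem_filter, Finset.mem_univ, true_and] at hp
    have hag : ∀ j, p.2 ⟨J j, hJA j⟩ = p.1 ⟨J j, hJQ j⟩ := fun j => congrFun hp j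
    refine Prod.ext (funext fun s => ?_) (funext fun s => ?_)
    · -- first component
      obtain ⟨v, hv⟩ := s
      show dite _ _ _ = p.1 ⟨v, hv⟩
      by_cases h : A v
      · rw [dif_pos h]
        obtain ⟨j, hj⟩ := hAQ v h hv
        subst hj
        exact hag j
      · rw [dif_neg h]
    · -- second component
      show dite _ _ _ = p.2 s
      rw [dif_pos s.2]
  · intro xh _
    rfl

/-- **Associativity of einsum** (Theorem 2): given tensors `T₁,T₂,T₃` with index
strings `I₁,I₂,I₃`, an output string `I`, and intermediate output strings `I₄`
with `σ(I₄) = (σ(I₁)∪σ(I₂)) ∩ (σ(I₃)∪σ(I))` and `I₅` with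
`σ(I₅) = (σ(I₂)∪σ(I₃)) ∩ (σ(I₁)∪σ(I))`, the flat expression
`einsum(I₁,I₂,I₃ → I; T₁,T₂,T₃)` equals both nested expressions
`einsum(I₄,I₃ → I; einsum(I₁,I₂ → I₄; T₁,T₂), T₃)` and
`einsum(I₁,I₅ → I; T₁, einsum(I₂,I₃ → I₅; T₂,T₃))`. -/
theorem einsum_assoc {R S : Type*} [CommSemiring R] [Fintype S] [DecidableEq S]
    (d : S → ℕ) {o1 o2 o3 m m4 m5 : ℕ}
    (I1 : Fin o1 → S) (I2 : Fin o2 → S) (I3 : Fin o3 → S)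
    (I : Fin m → S) (I4 : Fin m4 → S) (I5 : Fin m5 → S)
    (T1 : ((j : Fin o1) → Fin (d (I1 j))) → R)
    (T2 : ((j : Fin o2) → Fin (d (I2 j))) → R)
    (T3 : ((j : Fin o3) → Fin (d (I3 j))) → R)
    (h4 : Set.range I4 = (Set.range I1 ∪ Set.range I2) ∩ (Set.range I3 ∪ Set.range I))
    (h5 : Set.range I5 = (Set.range I2 ∪ Set.range I3) ∩ (Set.range I1 ∪ Set.range I))
    (hF : ∀ j, occurs (delim (C := fun x => Fin (Sum.elim (fun _ : Unit => o1)
        (Sum.elim (fun _ : Unit => o2) (fun _ : Unit => o3)) x) → S)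
        (fun _ => I1) (delim (fun _ => I2) (fun _ => I3))) (I j))
    (hI4 : ∀ j, occurs (delim (C := fun x => Fin (Sum.elim (fun _ : Unit => o1)
        (fun _ : Unit => o2) x) → S) (fun _ => I1) (fun _ => I2)) (I4 j))
    (hI5 : ∀ j, occurs (delim (C := fun x => Fin (Sum.elim (fun _ : Unit => o2)
        (fun _ : Unit => o3) x) → S) (fun _ => I2) (fun _ => I3)) (I5 j))
    (hL : ∀ j, occurs (delim (C := fun x => Fin (Sum.elim (fun _ : Unit => m4)
        (fun _ : Unit => o3) x) → S) (fun _ => I4) (fun _ => I3)) (I j))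
    (hR : ∀ j, occurs (delim (C := fun x => Fin (Sum.elim (fun _ : Unit => o1)
        (fun _ : Unit => m5) x) → S) (fun _ => I1) (fun _ => I5)) (I j)) :
    einsum d (delim (C := fun x => Fin (Sum.elim (fun _ : Unit => o1)
        (Sum.elim (fun _ : Unit => o2) (fun _ : Unit => o3)) x) → S)
        (fun _ => I1) (delim (fun _ => I2) (fun _ => I3))) I hF
        (delim (fun _ => T1) (delim (fun _ => T2) (fun _ => T3)))
      = einsum d (delim (C := fun x => Fin (Sum.elim (fun _ : Unit => m4)
          (fun _ : Unit => o3) x) → S) (fun _ => I4) (fun _ => I3)) I hL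
          (delim (fun _ => einsum d (delim (C := fun x => Fin (Sum.elim (fun _ : Unit => o1)
            (fun _ : Unit => o2) x) → S) (fun _ => I1) (fun _ => I2)) I4 hI4
            (delim (fun _ => T1) (fun _ => T2))) (fun _ => T3))
    ∧
    einsum d (delim (C := fun x => Fin (Sum.elim (fun _ : Unit => o1)
        (Sum.elim (fun _ : Unit => o2) (fun _ : Unit => o3)) x) → S)
        (fun _ => I1) (delim (fun _ => I2) (fun _ => I3))) I hF
        (delim (fun _ => T1) (delim (fun _ => T2) (fun _ => T3)))
      = einsum d (delim (C := fun x => Fin (Sum.elim (fun _ : Unit => o1)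
          (fun _ : Unit => m5) x) → S) (fun _ => I1) (fun _ => I5)) I hR
          (delim (fun _ => T1) (fun _ => einsum d (delim (C := fun x =>
            Fin (Sum.elim (fun _ : Unit => o2) (fun _ : Unit => o3) x) → S)
            (fun _ => I2) (fun _ => I3)) I5 hI5 (delim (fun _ => T2) (fun _ => T3)))) := by
  have occ2 : ∀ {a b : ℕ} (X : Fin a → S) (Y : Fin b → S) (s : S),
      occurs (delim (C := fun x => Fin (Sum.elim (fun _ : Unit => a)
        (fun _ : Unit => b) x) → S) (fun _ => X) (fun _ => Y)) s ↔
      (∃ k, X k = s) ∨ (∃ k, Y k = s) := by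
    intro a b X Y s
    constructor
    · rintro ⟨(i | i), k, h⟩
      · exact .inl ⟨k, h⟩
      · exact .inr ⟨k, h⟩
    · rintro (⟨k, h⟩ | ⟨k, h⟩)
      · exact ⟨.inl (), k, h⟩
      · exact ⟨.inr (), k, h⟩
  have occ3 : ∀ (s : S),
      occurs (delim (C := fun x => Fin (Sum.elim (fun _ : Unit => o1)
        (Sum.elim (fun _ : Unit => o2) (fun _ : Unit => o3)) x) → S)
        (fun _ => I1) (delim (fun _ => I2) (fun _ => I3))) s ↔
      (∃ k, I1 k = s) ∨ (∃ k, I2 k = s) ∨ (∃ k, I3 k = s) := by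
    intro s
    constructor
    · rintro ⟨(i | (i | i)), k, h⟩
      · exact .inl ⟨k, h⟩
      · exact .inr (.inl ⟨k, h⟩)
      · exact .inr (.inr ⟨k, h⟩)
    · rintro (⟨k, h⟩ | ⟨k, h⟩ | ⟨k, h⟩)
      · exact ⟨.inl (), k, h⟩
      · exact ⟨.inr (.inl ()), k, h⟩
      · exact ⟨.inr (.inr ()), k, h⟩
  have h4' : ∀ s : S, (∃ k, I4 k = s) ↔
      ((∃ k, I1 k = s) ∨ (∃ k, I2 k = s)) ∧ ((∃ k, I3 k = s) ∨ (∃ k, I k = s)) := by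
    intro s
    have := Set.ext_iff.mp h4 s
    simpa [Set.mem_union, Set.mem_range] using this
  have h5' : ∀ s : S, (∃ k, I5 k = s) ↔
      ((∃ k, I2 k = s) ∨ (∃ k, I3 k = s)) ∧ ((∃ k, I1 k = s) ∨ (∃ k, I k = s)) := by
    intro s
    have := Set.ext_iff.mp h5 s
    simpa [Set.mem_union, Set.mem_range] using this
  have prod2 : ∀ f : Unit ⊕ Unit → R, ∏ i, f i = f (.inl ()) * f (.inr ()) := by
    intro f; rw [Fintype.prod_sum_type]; simp
  have prod3 : ∀ f : Unit ⊕ (Unit ⊕ Unit) → R,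
      ∏ i, f i = f (.inl ()) * (f (.inr (.inl ())) * f (.inr (.inr ()))) := by
    intro f; rw [Fintype.prod_sum_type, Fintype.prod_sum_type]; simp
  constructor
  · funext x
    have hkey := einsum_key (R := R) d
      (occurs (delim (C := fun x => Fin (Sum.elim (fun _ : Unit => o1)
        (Sum.elim (fun _ : Unit => o2) (fun _ : Unit => o3)) x) → S)
        (fun _ => I1) (delim (fun _ => I2) (fun _ => I3))))
      (occurs (delim (C := fun x => Fin (Sum.elim (fun _ : Unit => m4)
        (fun _ : Unit => o3) x) → S) (fun _ => I4) (fun _ => I3)))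
      (occurs (delim (C := fun x => Fin (Sum.elim (fun _ : Unit => o1)
        (fun _ : Unit => o2) x) → S) (fun _ => I1) (fun _ => I2)))
      (fun s hs => by
        rcases (occ2 I4 I3 s).mp hs with h | ⟨k, hk⟩
        · rcases ((h4' s).mp h).1 with ⟨k, hk⟩ | ⟨k, hk⟩
          · exact ⟨.inl (), k, hk⟩
          · exact ⟨.inr (.inl ()), k, hk⟩
        · exact ⟨.inr (.inr ()), k, hk⟩)
      (fun s hs => by
        rcases (occ2 I1 I2 s).mp hs with ⟨k, hk⟩ | ⟨k, hk⟩
        · exact ⟨.inl (), k, hk⟩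
        · exact ⟨.inr (.inl ()), k, hk⟩)
      (fun s hs => by
        rcases (occ3 s).mp hs with ⟨k, hk⟩ | ⟨k, hk⟩ | ⟨k, hk⟩
        · exact .inl ⟨.inl (), k, hk⟩
        · exact .inl ⟨.inr (), k, hk⟩
        · exact .inr ⟨.inr (), k, hk⟩)
      I4 hI4 (fun j => ⟨.inl (), j, rfl⟩)
      (fun s hsA hsQ => by
        rcases (occ2 I4 I3 s).mp hsQ with h | ⟨k, hk⟩
        · exact h
        · exact (h4' s).mpr ⟨(occ2 I1 I2 s).mp hsA, .inl ⟨k, hk⟩⟩)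
      (fun zh => T1 (fun j => zh ⟨I1 j, ⟨.inl (), j, rfl⟩⟩) *
        T2 (fun j => zh ⟨I2 j, ⟨.inr (), j, rfl⟩⟩))
      (fun yh => if (fun j => yh ⟨I j, hL j⟩) = x then
        T3 (fun j => yh ⟨I3 j, ⟨.inr (), j, rfl⟩⟩) else 0)
    refine Eq.trans ?_ (hkey.symm.trans ?_)
    · simp only [einsum, prod3, mul_ite, mul_zero, mul_assoc]
      rfl
    · simp only [einsum, prod2, mul_ite, mul_zero, ite_mul, zero_mul, delim]
      rfl
  · funext x
    have hkey := einsum_key (R := R) d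
      (occurs (delim (C := fun x => Fin (Sum.elim (fun _ : Unit => o1)
        (Sum.elim (fun _ : Unit => o2) (fun _ : Unit => o3)) x) → S)
        (fun _ => I1) (delim (fun _ => I2) (fun _ => I3))))
      (occurs (delim (C := fun x => Fin (Sum.elim (fun _ : Unit => o1)
        (fun _ : Unit => m5) x) → S) (fun _ => I1) (fun _ => I5)))
      (occurs (delim (C := fun x => Fin (Sum.elim (fun _ : Unit => o2)
        (fun _ : Unit => o3) x) → S) (fun _ => I2) (fun _ => I3)))
      (fun s hs => by
        rcases (occ2 I1 I5 s).mp hs with ⟨k, hk⟩ | h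
        · exact ⟨.inl (), k, hk⟩
        · rcases ((h5' s).mp h).1 with ⟨k, hk⟩ | ⟨k, hk⟩
          · exact ⟨.inr (.inl ()), k, hk⟩
          · exact ⟨.inr (.inr ()), k, hk⟩)
      (fun s hs => by
        rcases (occ2 I2 I3 s).mp hs with ⟨k, hk⟩ | ⟨k, hk⟩
        · exact ⟨.inr (.inl ()), k, hk⟩
        · exact ⟨.inr (.inr ()), k, hk⟩)
      (fun s hs => by
        rcases (occ3 s).mp hs with ⟨k, hk⟩ | ⟨k, hk⟩ | ⟨k, hk⟩
        · exact .inr ⟨.inl (), k, hk⟩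
        · exact .inl ⟨.inl (), k, hk⟩
        · exact .inl ⟨.inr (), k, hk⟩)
      I5 hI5 (fun j => ⟨.inr (), j, rfl⟩)
      (fun s hsA hsQ => by
        rcases (occ2 I1 I5 s).mp hsQ with ⟨k, hk⟩ | h
        · exact (h5' s).mpr ⟨(occ2 I2 I3 s).mp hsA, .inl ⟨k, hk⟩⟩
        · exact h)
      (fun zh => T2 (fun j => zh ⟨I2 j, ⟨.inl (), j, rfl⟩⟩) *
        T3 (fun j => zh ⟨I3 j, ⟨.inr (), j, rfl⟩⟩))
      (fun yh => if (fun j => yh ⟨I j, hR j⟩) = x then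
        T1 (fun j => yh ⟨I1 j, ⟨.inl (), j, rfl⟩⟩) else 0)
    refine Eq.trans ?_ (hkey.symm.trans ?_)
    · simp only [einsum, prod3, mul_ite, mul_zero, delim]
      refine Finset.sum_congr rfl fun xh _ => ?_
      exact if_congr Iff.rfl (mul_comm _ _) rfl
    · simp only [einsum, prod2, mul_ite, mul_zero, ite_mul, zero_mul, delim]
      refine Finset.sum_congr rfl fun yh _ => ?_
      exact if_congr Iff.rfl (mul_comm _ _) rfl
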